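/- Let V be a metrizable real topological vector space and let (S_i)_{i∈ℕ} be an increasing sequence (S_1 ⊆ S_2 ⊆ ...) of absolutely convex subsets of V such that every von Neumann bounded subset of V is contained in some S_i. Then there exists an index i such that S_i absorbs every von Neumann bounded subset of V; that is, for every bounded B ⊆ V there is λ > 0 with B ⊆ λ·S_i. -/

import Mathlib

open Pointwise

/-- **(Köthe's lemma.)** Let `V` be a metrizable real topological vector space and
`S : ℕ → Set V` an increasing sequence of absolutely convex (convex and balanced)
subsets such that every von Neumann bounded subset of `V` is contained in some `S i`.
Then some `S i` absorbs every von Neumann bounded subset of `V`: for every bounded `B`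
there is `λ > 0` with `B ⊆ λ • S i`. -/
theorem stmt3 (V : Type*)
    [AddCommGroup V] [Module ℝ V] [TopologicalSpace V] [IsTopologicalAddGroup V]
    [ContinuousSMul ℝ V] [TopologicalSpace.MetrizableSpace V]
    (S : ℕ → Set V) (hmono : Monotone S)
    (hconv : ∀ i, Convex ℝ (S i)) (hbal : ∀ i, Balanced ℝ (S i))
    (hcontain : ∀ B : Set V, Bornology.IsVonNBounded ℝ B → ∃ i, B ⊆ S i) :
    ∃ i, ∀ B : Set V, Bornology.IsVonNBounded ℝ B → ∃ l : ℝ, 0 < l ∧ B ⊆ l • S i := by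
  by_contra h
  push_neg at h
  -- For each `i`, pick a bounded set `B i` not absorbed by `S i`.
  choose B hBb hBn using h
  -- For each `i` and `n`, pick `x i n ∈ B i` with `x i n ∉ (n+1) • S i`.
  have hx : ∀ i n : ℕ, ∃ y ∈ B i, y ∉ ((n : ℝ) + 1) • S i := fun i n =>
    Set.not_subset.mp (hBn i ((n : ℝ) + 1) (by positivity))
  choose x hxB hxS using hx
  -- For fixed `i`, `(n+1)⁻¹ • x i n → 0` since `B i` is bounded.
  have hε : Filter.Tendsto (fun n : ℕ => ((n : ℝ) + 1)⁻¹) Filter.atTop (nhds 0) :=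
    Filter.Tendsto.inv_tendsto_atTop
      (Filter.tendsto_atTop_add_const_right _ 1 tendsto_natCast_atTop_atTop)
  have htend : ∀ i, Filter.Tendsto (fun n : ℕ => ((n : ℝ) + 1)⁻¹ • x i n)
      Filter.atTop (nhds 0) := fun i =>
    (hBb i).smul_tendsto_zero (Filter.Eventually.of_forall (hxB i)) hε
  -- Get a countable antitone basis of neighborhoods of 0 (metrizability).
  obtain ⟨u, hu⟩ := (nhds (0 : V)).exists_antitone_basis
  -- Choose `n i` with `(n i + 1)⁻¹ • x i (n i) ∈ u i`.
  have hchoice : ∀ i : ℕ, ∃ n : ℕ, ((n : ℝ) + 1)⁻¹ • x i n ∈ u i := by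
    intro i
    have := (htend i).eventually (hu.toHasBasis.mem_of_mem (i := i) trivial
      |> Filter.eventually_mem_set.mpr)
    exact this.exists
  choose n hn using hchoice
  set z : ℕ → V := fun i => ((n i : ℝ) + 1)⁻¹ • x i (n i) with hz
  have hztend : Filter.Tendsto z Filter.atTop (nhds 0) := hu.tendsto hn
  have hzbdd : Bornology.IsVonNBounded ℝ (Set.range z) := hztend.isVonNBounded_range ℝ
  obtain ⟨k, hk⟩ := hcontain _ hzbdd
  refine hxS k (n k) ?_
  refine ⟨z k, hk (Set.mem_range_self k), ?_⟩
  have hc : ((n k : ℝ) + 1) ≠ 0 := by positivity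
  simp [hz, smul_smul, mul_inv_cancel₀ hc]
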